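/- Fix l ∈ {1,…,d} and suppose D_l := min_{i∈X}(a_{ll}(i) − 2r(i)) ≤ 0. Fix (t̂, ŝ) ∈ [0,T) × R with ln(s_l^u/ŝ_l) > −D_l (T − t̂). Set ε_l = (T − t̂) ln k_l / ln(s_l^u/ŝ_l) and let γ_l be any number with 0 < γ_l < min( (1/(2 max_{i∈X} a_{ll}(i)))(1 + D_l ε_l/ln k_l), ε_l/(2 ln k_l) ) (both bounds are independent of k_l since ε_l/ln k_l = (T−t̂)/ln(s_l^u/ŝ_l)). Then there exists K₀ > 1 such that for every k_l ≥ K₀, the function y_l(t,s,i) = (T+ε_l−t)^{−1/2} exp(−γ_l (ln(s_l/(k_l s_l^u)))²/(T+ε_l−t)) satisfies ∂y_l/∂t(t,s,i) + L y_l(t,s,i) ≤ 0 for all (t,s,i) ∈ (0,T) × R × X. -/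

import Mathlib

open MeasureTheory Real Filter Matrix

noncomputable section

/-- The positive orthant `(0,∞)^d`. -/
def orthant (d : ℕ) : Set (Fin d → ℝ) := Set.univ.pi fun _ => Set.Ioi (0:ℝ)

/-- The ℓ¹ norm `‖s‖₁ = ∑ l |s l|`. -/
def norm1 {d : ℕ} (s : Fin d → ℝ) : ℝ := ∑ l, |s l|

/-- The diffusion matrix `a(i) = σ(i) σ(i)ᵀ`. -/
def amat {d k : ℕ} (σm : Fin k → Matrix (Fin d) (Fin d) ℝ) (i : Fin k) :
    Matrix (Fin d) (Fin d) ℝ := σm i * (σm i)ᵀ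

/-- The lognormal density `α(x,s,i,v)`. -/
def alpha {d k : ℕ} (r : Fin k → ℝ) (σm : Fin k → Matrix (Fin d) (Fin d) ℝ)
    (x s : Fin d → ℝ) (i : Fin k) (v : ℝ) : ℝ :=
  Real.exp (-(1/2 : ℝ) * ∑ l, ∑ l',
      (v • amat σm i)⁻¹ l l'
        * (Real.log (x l / s l) - (r i - (1/2 : ℝ) * amat σm i l l) * v)
        * (Real.log (x l' / s l') - (r i - (1/2 : ℝ) * amat σm i l' l') * v))
    / (Real.sqrt ((2 * Real.pi) ^ d * (v • amat σm i).det) * ∏ l, x l)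

/-- Partial derivative in the `l`-th space coordinate. -/
def pd {d : ℕ} (l : Fin d) (f : (Fin d → ℝ) → ℝ) (s : Fin d → ℝ) : ℝ :=
  deriv (fun c => f (Function.update s l c)) (s l)

/-- The spatial operator `𝕃`. -/
def Lop {d k : ℕ} (r : Fin k → ℝ) (σm : Fin k → Matrix (Fin d) (Fin d) ℝ)
    (Λ : Fin k → Fin k → ℝ) (φ : ℝ → (Fin d → ℝ) → Fin k → ℝ)
    (t : ℝ) (s : Fin d → ℝ) (i : Fin k) : ℝ :=
  r i * ∑ l, s l * pd l (fun s' => φ t s' i) s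
  + (1/2 : ℝ) * ∑ l, ∑ l',
      amat σm i l l' * s l * s l' * pd l (pd l' (fun s' => φ t s' i)) s
  - r i * φ t s i + ∑ j, Λ i j * φ t s j

/-- The open box `R = Π_l (s_l^b, s_l^u)`. -/
def Rset {d : ℕ} (sb su : Fin d → ℝ) : Set (Fin d → ℝ) :=
  Set.univ.pi fun l => Set.Ioo (sb l) (su l)

/-- The barrier function `y_l(t,s) = (T+ε_l−t)^{-1/2} exp(−γ_l (ln(s_l/(k_l s_l^u)))²/(T+ε_l−t))`. -/
def yl {d : ℕ} (T εl γl kl slu : ℝ) (l : Fin d) (t : ℝ) (s : Fin d → ℝ) : ℝ :=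
  (Real.sqrt (T + εl - t))⁻¹ *
    Real.exp (-γl * (Real.log (s l / (kl * slu)))^2 / (T + εl - t))

/- ### Auxiliary lemmas -/

def φf (τ γ A c : ℝ) : ℝ :=
  (Real.sqrt τ)⁻¹ * Real.exp (-γ * (Real.log (c / A))^2 / τ)

lemma hasDerivAt_logdiv {A c : ℝ} (hA : A ≠ 0) (hc : c ≠ 0) :
    HasDerivAt (fun x => Real.log (x / A)) c⁻¹ c := by
  have h : HasDerivAt (fun x : ℝ => x / A) (1 / A) c := (hasDerivAt_id c).div_const A
  have h2 := h.log (div_ne_zero hc hA)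
  convert h2 using 1
  field_simp

lemma hasDerivAt_φf {τ γ A c : ℝ} (hA : A ≠ 0) (hc : c ≠ 0) :
    HasDerivAt (φf τ γ A) (φf τ γ A c * (-2 * γ * Real.log (c / A) / τ) / c) c := by
  have hu := hasDerivAt_logdiv hA hc
  have h2 : HasDerivAt (fun x => (Real.log (x / A)) ^ 2) (2 * Real.log (c/A) * c⁻¹) c := by
    simpa using hu.fun_pow 2
  have h3 := (((h2.const_mul (-γ)).div_const τ).exp).const_mul (Real.sqrt τ)⁻¹
  convert h3 using 1
  · rfl
  · rfl
  · rfl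
  unfold φf
  field_simp

lemma deriv2_φf {τ γ A c : ℝ} (hτ : τ ≠ 0) (hA : A ≠ 0) (hc : 0 < c) :
    deriv (deriv (φf τ γ A)) c = φf τ γ A c / c^2 *
      (4*γ^2*(Real.log (c/A))^2/τ^2 - 2*γ/τ + 2*γ*Real.log (c/A)/τ) := by
  have hev : deriv (φf τ γ A) =ᶠ[nhds c]
      fun x => (φf τ γ A x * (-2 * γ * Real.log (x / A) / τ)) * x⁻¹ := by
    filter_upwards [Ioi_mem_nhds hc] with x hx
    rw [(hasDerivAt_φf hA (ne_of_gt hx)).deriv, div_eq_mul_inv]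
  rw [hev.deriv_eq]
  have hF := hasDerivAt_φf (τ := τ) (γ := γ) hA hc.ne'
  have hK : HasDerivAt (fun x => -2 * γ * Real.log (x / A) / τ) (-2 * γ * c⁻¹ / τ) c :=
    ((hasDerivAt_logdiv hA hc.ne').const_mul (-2 * γ)).div_const τ
  have hG := (hF.fun_mul hK).fun_mul (hasDerivAt_inv hc.ne')
  rw [hG.deriv]
  field_simp
  ring

lemma hasDerivAt_yt {T ε γ z : ℝ} {t : ℝ} (hτ : 0 < T + ε - t) :
    HasDerivAt (fun t' => (Real.sqrt (T + ε - t'))⁻¹ * Real.exp (-γ * z^2 / (T + ε - t')))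
      (((Real.sqrt (T + ε - t))⁻¹ * Real.exp (-γ * z^2 / (T + ε - t)))
        * (1/(2*(T + ε - t)) - γ * z^2 / (T + ε - t)^2)) t := by
  have hτ' : HasDerivAt (fun t' : ℝ => T + ε - t') (-1) t := by
    simpa using (hasDerivAt_id t).const_sub (T + ε)
  have hs : HasDerivAt (fun t' => Real.sqrt (T + ε - t'))
      (1 / (2 * Real.sqrt (T + ε - t)) * (-1)) t :=
    (Real.hasDerivAt_sqrt hτ.ne').comp t hτ'
  have hsne : Real.sqrt (T + ε - t) ≠ 0 := (Real.sqrt_pos.mpr hτ).ne'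
  have hinv := hs.fun_inv hsne
  have hiv : HasDerivAt (fun t' => (T + ε - t')⁻¹) (-(-1) / (T + ε - t)^2) t :=
    hτ'.inv hτ.ne'
  have he : HasDerivAt (fun t' => Real.exp (-γ * z^2 / (T + ε - t')))
      (Real.exp (-γ * z^2 / (T + ε - t)) * ((-γ * z^2) * (-(-1) / (T + ε - t)^2))) t := by
    have h := ((hiv.const_mul (-γ * z^2)).exp)
    simpa [div_eq_mul_inv] using h
  have hfin := hinv.fun_mul he
  convert hfin using 1
  · rfl
  · rfl
  have h2 : Real.sqrt (T + ε - t) ^ 2 = T + ε - t := Real.sq_sqrt hτ.le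
  rw [← h2]
  field_simp
  rw [h2]
  linear_combination (-(Real.sqrt (T + ε - t))^2) * h2

lemma pd_comp {d : ℕ} (l : Fin d) (g : ℝ → ℝ) (s : Fin d → ℝ) :
    pd l (fun s' => g (s' l)) s = deriv g (s l) := by
  unfold pd
  simp [Function.update_self]

lemma pd_comp_ne {d : ℕ} {l m : Fin d} (h : m ≠ l) (g : ℝ → ℝ) (s : Fin d → ℝ) :
    pd m (fun s' => g (s' l)) s = 0 := by
  unfold pd
  simp [Function.update_of_ne h.symm]

lemma pd_zero {d : ℕ} (m : Fin d) (s : Fin d → ℝ) :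
    pd m (fun _ => (0:ℝ)) s = 0 := by
  unfold pd; simp

lemma final_bound {γ β₀ D c T m w τ δ : ℝ}
    (hγ : 0 < γ) (hc : 0 < c) (hT : 0 < T)
    (hδ : δ = (γ*β₀/c + γ*D)/2) (hδpos : 0 < δ)
    (hm1 : γ*β₀*T/(c^2*δ) ≤ m) (hm2 : 1/(2*δ) ≤ m)
    (hw : m ≤ w) (hτ0 : 0 < τ) (hτ : τ ≤ T + c*m) (hβ₀ : 0 < β₀) (hD : D ≤ 0) :
    γ*(-D)*w + 1/2 ≤ γ*β₀*w^2/τ := by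
  have hm0 : 0 < m := lt_of_lt_of_le (by positivity) hm2
  have hw0 : 0 < w := lt_of_lt_of_le hm0 hw
  have hTcm : 0 < T + c*m := by positivity
  have hδ' : 2*δ*c = γ*β₀ + γ*D*c := by rw [hδ]; field_simp
  have hm1' : γ*β₀*T ≤ m*(c^2*δ) := by
    rw [div_le_iff₀ (by positivity)] at hm1; linarith [hm1]
  have h2 : δ - γ*D ≤ γ*β₀*m/(T+c*m) := by
    rw [le_div_iff₀ hTcm]
    nlinarith [mul_pos hδpos hT, mul_pos hc hm0, hm1', hδ']
  have hm2' : 1 ≤ 2*δ*m := by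
    rw [div_le_iff₀ (by positivity)] at hm2; linarith
  have h3 : γ*(-D)*w + 1/2 ≤ γ*β₀*w*m/(T+c*m) := by
    have h4 : w*(δ - γ*D) ≤ w*(γ*β₀*m/(T+c*m)) :=
      mul_le_mul_of_nonneg_left h2 hw0.le
    have h5 : w*(γ*β₀*m/(T+c*m)) = γ*β₀*w*m/(T+c*m) := by ring
    rw [h5] at h4
    nlinarith [mul_le_mul_of_nonneg_left hw hδpos.le]
  refine le_trans h3 ?_
  exact div_le_div₀ (by positivity)
    (by nlinarith [mul_le_mul_of_nonneg_left hw (mul_pos (mul_pos hγ hβ₀) hw0).le]) hτ0 hτ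

lemma combine_eq {y τ z sl a γ R : ℝ} (hτ : τ ≠ 0) (hsl : sl ≠ 0) :
    y * (1/(2*τ) - γ * z^2/τ^2)
      + (R * (sl * (y * (-2*γ*z/τ) / sl))
        + (1/2) * (a * sl * sl * (y/sl^2 * (4*γ^2*z^2/τ^2 - 2*γ/τ + 2*γ*z/τ)))
        - R * y + 0)
      = y/τ * (γ*(z^2/τ)*(2*a*γ - 1) + γ*z*(a - 2*R) + (1 - 2*a*γ)/2 - R * τ) := by
  field_simp
  ring

lemma Q_nonpos {γ β₀ Dl z τ a R u : ℝ} (hγ : 0 < γ) (hτ : 0 < τ) (hR : 0 ≤ R)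
    (ha : 0 ≤ a) (hβ : β₀ ≤ 1 - 2*a*γ) (haD : Dl ≤ a - 2*R) (hw0 : 0 < -z)
    (hu : 0 ≤ u)
    (key : γ*Dl*z + 1/2 ≤ γ*β₀*u) :
    γ*u*(2*a*γ - 1) + γ*z*(a - 2*R) + (1 - 2*a*γ)/2 - R * τ ≤ 0 := by
  have p1 := mul_nonneg (sub_nonneg.mpr hβ) (mul_nonneg hγ.le hu)
  have p2 := mul_nonneg (sub_nonneg.mpr haD) (mul_nonneg hγ.le hw0.le)
  have p3 := mul_nonneg hR hτ.le
  have p4 := mul_nonneg ha hγ.le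
  nlinarith [p1, p2, p3, p4, key]

set_option maxHeartbeats 1000000 in
theorem stmt_16 (d k : ℕ) (hd : 1 ≤ d) (hk : 0 < k)
    (r : Fin k → ℝ) (hr : ∀ i, 0 ≤ r i)
    (σm : Fin k → Matrix (Fin d) (Fin d) ℝ) (hσ : ∀ i, IsUnit (σm i).det)
    (Λ : Fin k → Fin k → ℝ) (hΛ1 : ∀ i j, i ≠ j → 0 ≤ Λ i j)
    (hΛ2 : ∀ i : Fin k, ∑ j, Λ i j = 0)
    (T : ℝ) (hT : 0 < T)
    (sb su : Fin d → ℝ) (hbu : ∀ l, 0 ≤ sb l ∧ sb l < su l)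
    (l : Fin d)
    (Dl : ℝ)
    (hDl : Dl = Finset.univ.inf' ⟨⟨0, hk⟩, Finset.mem_univ _⟩
        (fun i : Fin k => amat σm i l l - 2 * r i))
    (hDnonpos : Dl ≤ 0)
    (amax : ℝ)
    (hamax : amax = Finset.univ.sup' ⟨⟨0, hk⟩, Finset.mem_univ _⟩
        (fun i : Fin k => amat σm i l l))
    (that : ℝ) (shat : Fin d → ℝ)
    (hthat : that ∈ Set.Ico (0:ℝ) T) (hshat : shat ∈ Rset sb su)
    (hcond : Real.log (su l / shat l) > -Dl * (T - that))
    (γl : ℝ) (hγpos : 0 < γl)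
    (hγlt : γl < min ((1 / (2 * amax)) * (1 + Dl * (T - that) / Real.log (su l / shat l)))
        ((T - that) / (2 * Real.log (su l / shat l)))) :
    ∃ K₀ : ℝ, 1 < K₀ ∧ ∀ kl : ℝ, K₀ ≤ kl →
      ∀ t ∈ Set.Ioo (0:ℝ) T, ∀ s ∈ Rset sb su, ∀ i : Fin k,
        deriv (fun t' =>
            yl T ((T - that) * Real.log kl / Real.log (su l / shat l)) γl kl (su l) l t' s) t
          + Lop r σm Λ (fun t'' s'' _ =>
              yl T ((T - that) * Real.log kl / Real.log (su l / shat l)) γl kl (su l) l t'' s'')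
              t s i ≤ 0 := by
  obtain ⟨hthat0, hthatT⟩ := hthat
  have hq : 0 < T - that := sub_pos.mpr hthatT
  have hL : 0 < Real.log (su l / shat l) :=
    lt_of_le_of_lt (mul_nonneg (neg_nonneg.mpr hDnonpos) hq.le) hcond
  set c : ℝ := (T - that) / Real.log (su l / shat l) with hcdef
  have hc : 0 < c := div_pos hq hL
  -- positivity of diagonal entries of a
  have hapos : ∀ i, 0 < amat σm i l l := by
    intro i
    have he : amat σm i l l = ∑ j, (σm i l j)^2 := by
      simp [amat, Matrix.mul_apply, Matrix.transpose_apply, sq]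
    rw [he]
    rcases lt_or_eq_of_le (Finset.sum_nonneg fun j _ => sq_nonneg (σm i l j)) with h | h
    · exact h
    · exfalso
      have hz : ∀ j, σm i l j = 0 := by
        intro j
        have := (Finset.sum_eq_zero_iff_of_nonneg
          (fun j _ => sq_nonneg (σm i l j))).mp h.symm j (Finset.mem_univ j)
        exact (pow_eq_zero_iff two_ne_zero).mp this
      have hdet : (σm i).det = 0 := Matrix.det_eq_zero_of_row_eq_zero l hz
      exact (isUnit_iff_ne_zero.mp (hσ i)) hdet
  have i₀ : Fin k := ⟨0, hk⟩
  have hamaxpos : 0 < amax := by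
    rw [hamax]
    exact lt_of_lt_of_le (hapos i₀) (Finset.le_sup' (fun i : Fin k => amat σm i l l) (Finset.mem_univ i₀))
  set β₀ : ℝ := 1 - 2 * amax * γl with hβ₀def
  have hγ1 : γl < (1/(2*amax)) * (1 + Dl * (T - that) / Real.log (su l / shat l)) :=
    lt_of_lt_of_le hγlt (min_le_left _ _)
  have hDc : Dl * (T - that) / Real.log (su l / shat l) = Dl * c := by
    rw [hcdef]; ring
  have hβ₀gt : -Dl * c < β₀ := by
    rw [hDc] at hγ1
    have h2 : 2 * amax * γl < 1 + Dl * c := by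
      have := mul_lt_mul_of_pos_left hγ1 (show (0:ℝ) < 2*amax by linarith)
      calc 2 * amax * γl < 2 * amax * ((1/(2*amax)) * (1 + Dl * c)) := this
        _ = 1 + Dl * c := by field_simp
    simp only [hβ₀def]; linarith
  have hβ₀pos : 0 < β₀ :=
    lt_of_le_of_lt (mul_nonneg (neg_nonneg.mpr hDnonpos) hc.le) hβ₀gt
  set δ : ℝ := (γl * β₀ / c + γl * Dl) / 2 with hδdef
  have hδpos : 0 < δ := by
    have he : γl * β₀ / c + γl * Dl = γl * (β₀ + Dl * c) / c := by field_simp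
    have : 0 < γl * (β₀ + Dl * c) / c :=
      div_pos (mul_pos hγpos (by linarith)) hc
    rw [hδdef, he]; linarith
  set m₀ : ℝ := max (max (γl * β₀ * T / (c^2 * δ)) (1/(2*δ))) 1 with hm₀def
  refine ⟨Real.exp m₀, ?_, ?_⟩
  · calc (1:ℝ) = Real.exp 0 := Real.exp_zero.symm
      _ < Real.exp m₀ := Real.exp_lt_exp.mpr
          (lt_of_lt_of_le one_pos (le_max_right _ _))
  intro kl hkl t ht s hs i
  have hkl0 : 0 < kl := lt_of_lt_of_le (Real.exp_pos m₀) hkl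
  have hm : m₀ ≤ Real.log kl := by
    rw [← Real.log_exp m₀]
    exact Real.log_le_log (Real.exp_pos m₀) hkl
  set m : ℝ := Real.log kl with hmdef
  have hm1 : γl * β₀ * T / (c^2 * δ) ≤ m :=
    le_trans (le_trans (le_max_left _ _) (le_max_left _ _)) hm
  have hm2 : 1/(2*δ) ≤ m :=
    le_trans (le_trans (le_max_right _ _) (le_max_left _ _)) hm
  have hm3 : 1 ≤ m := le_trans (le_max_right _ _) hm
  set ε : ℝ := (T - that) * Real.log kl / Real.log (su l / shat l) with hεdef
  have hε : ε = c * m := by rw [hεdef, hcdef, hmdef]; ring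
  obtain ⟨ht0, htT⟩ := ht
  have hτpos : 0 < T + ε - t := by
    have : 0 < ε := by rw [hε]; positivity
    linarith
  have hτle : T + ε - t ≤ T + c * m := by rw [← hε]; linarith
  -- facts about s
  have hsl := hs l (Set.mem_univ l)
  simp only [Set.mem_Ioo] at hsl
  have hsl0 : 0 < s l := lt_of_le_of_lt (hbu l).1 hsl.1
  have hsu0 : 0 < su l := lt_of_le_of_lt (hbu l).1 (hbu l).2
  have hA : 0 < kl * su l := mul_pos hkl0 hsu0
  set τ : ℝ := T + ε - t with hτdef
  set z : ℝ := Real.log (s l / (kl * su l)) with hzdef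
  set A : ℝ := kl * su l with hAdef
  -- w = -z ≥ m
  have hw : m ≤ -z := by
    rw [hzdef, Real.log_div hsl0.ne' hA.ne', hAdef, Real.log_mul hkl0.ne' hsu0.ne']
    have : Real.log (s l) ≤ Real.log (su l) := Real.log_le_log hsl0 hsl.2.le
    rw [hmdef]; linarith
  have hw0 : 0 < -z := lt_of_lt_of_le (by linarith) hw
  -- y > 0
  set y : ℝ := φf τ γl A (s l) with hydef
  have hy : 0 < y := by
    rw [hydef]
    unfold φf
    positivity
  -- time derivative
  have hd1 : deriv (fun t' => yl T ε γl kl (su l) l t' s) t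
      = y * (1/(2*τ) - γl * z^2/τ^2) := by
    have h := (hasDerivAt_yt (T := T) (ε := ε) (γ := γl)
      (z := Real.log (s l / (kl * su l))) hτpos).deriv
    exact h
  -- spatial derivatives
  have hF' : deriv (φf τ γl A) (s l) = y * (-2*γl*z/τ) / (s l) :=
    (hasDerivAt_φf hA.ne' hsl0.ne').deriv
  have hF'' : deriv (deriv (φf τ γl A)) (s l)
      = y/(s l)^2 * (4*γl^2*z^2/τ^2 - 2*γl/τ + 2*γl*z/τ) :=
    deriv2_φf hτpos.ne' hA.ne' hsl0
  -- identify the barrier with φf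
  have hfun : (fun s' => yl T ε γl kl (su l) l t s') = (fun s' => φf τ γl A (s' l)) := rfl
  -- pd computations
  have hpd1 : ∀ m' : Fin d, pd m' (fun s' => φf τ γl A (s' l)) s
      = if m' = l then deriv (φf τ γl A) (s l) else 0 := by
    intro m'
    by_cases h : m' = l
    · rw [h, if_pos rfl]; exact pd_comp l _ s
    · rw [if_neg h]; exact pd_comp_ne h _ s
  have hpd2 : ∀ m1 m2 : Fin d, pd m1 (pd m2 (fun s' => φf τ γl A (s' l))) s
      = if m1 = l ∧ m2 = l then deriv (deriv (φf τ γl A)) (s l) else 0 := by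
    intro m1 m2
    by_cases h2 : m2 = l
    · rw [h2]
      have hrw : pd l (fun s' => φf τ γl A (s' l)) = fun s' => deriv (φf τ γl A) (s' l) :=
        funext fun s' => pd_comp l _ s'
      rw [hrw]
      by_cases h1 : m1 = l
      · rw [h1, if_pos ⟨rfl, rfl⟩]; exact pd_comp l _ s
      · rw [if_neg (fun hcon => h1 hcon.1)]; exact pd_comp_ne h1 _ s
    · have hrw : pd m2 (fun s' => φf τ γl A (s' l)) = fun _ => (0:ℝ) :=
        funext fun s' => pd_comp_ne h2 _ s'
      rw [hrw, if_neg (by tauto)]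
      exact pd_zero m1 s
  -- compute Lop
  have hLop : Lop r σm Λ (fun t'' s'' _ => yl T ε γl kl (su l) l t'' s'') t s i
      = r i * (s l * deriv (φf τ γl A) (s l))
        + (1/2) * (amat σm i l l * s l * s l * deriv (deriv (φf τ γl A)) (s l))
        - r i * y + 0 := by
    unfold Lop
    have e1 : ∑ m', s m' * pd m' (fun s' => yl T ε γl kl (su l) l t s') s
        = s l * deriv (φf τ γl A) (s l) := by
      rw [show (fun s' => yl T ε γl kl (su l) l t s') = (fun s' => φf τ γl A (s' l)) from rfl]
      rw [Finset.sum_eq_single l]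
      · rw [hpd1 l, if_pos rfl]
      · intro b _ hb; rw [hpd1 b, if_neg hb, mul_zero]
      · intro h; exact absurd (Finset.mem_univ l) h
    have e2 : ∑ m1, ∑ m2, amat σm i m1 m2 * s m1 * s m2 *
          pd m1 (pd m2 (fun s' => yl T ε γl kl (su l) l t s')) s
        = amat σm i l l * s l * s l * deriv (deriv (φf τ γl A)) (s l) := by
      rw [show (fun s' => yl T ε γl kl (su l) l t s') = (fun s' => φf τ γl A (s' l)) from rfl]
      have : ∀ m1 m2 : Fin d, amat σm i m1 m2 * s m1 * s m2 *
            pd m1 (pd m2 (fun s' => φf τ γl A (s' l))) s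
          = if m1 = l then (if m2 = l then
              amat σm i l l * s l * s l * deriv (deriv (φf τ γl A)) (s l) else 0) else 0 := by
        intro m1 m2
        rw [hpd2]
        by_cases h1 : m1 = l
        · by_cases h2 : m2 = l
          · rw [h1, h2]; simp
          · rw [if_neg (fun hcon => h2 hcon.2), if_pos h1, if_neg h2, mul_zero]
        · rw [if_neg (fun hcon => h1 hcon.1), if_neg h1, mul_zero]
      simp only [this]
      simp [Finset.sum_ite_eq', Finset.mem_univ]
    have e3 : ∑ j, Λ i j * yl T ε γl kl (su l) l t s = 0 := by
      rw [← Finset.sum_mul, hΛ2 i, zero_mul]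
    simp only []
    rw [e1, e2, e3]
    rfl
  rw [hd1, hLop, hF', hF'']
  -- reduce to the scalar inequality
  set a : ℝ := amat σm i l l with hadef
  have ha0 : 0 < a := hapos i
  have hβ : β₀ ≤ 1 - 2*a*γl := by
    have : a ≤ amax := by
      rw [hamax, hadef]
      exact Finset.le_sup' (fun i : Fin k => amat σm i l l) (Finset.mem_univ i)
    have h2 := mul_nonneg (sub_nonneg.mpr this) hγpos.le
    rw [hβ₀def]; linarith only [h2]
  have haD : Dl ≤ a - 2*r i := by
    rw [hDl, hadef]
    exact Finset.inf'_le (fun i : Fin k => amat σm i l l - 2 * r i) (Finset.mem_univ i)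
  rw [combine_eq hτpos.ne' hsl0.ne']
  have key : γl*(-Dl)*(-z) + 1/2 ≤ γl*β₀*(-z)^2/τ :=
    final_bound hγpos hc hT hδdef hδpos hm1 hm2 hw hτpos hτle hβ₀pos hDnonpos
  have key2 : γl*Dl*z + 1/2 ≤ γl*β₀*(z^2/τ) := by
    have e1 : γl*(-Dl)*(-z) = γl*Dl*z := by ring
    have e2 : γl*β₀*(-z)^2/τ = γl*β₀*(z^2/τ) := by rw [neg_sq, mul_div_assoc]
    rw [e1, e2] at key; exact key
  have hu : (0:ℝ) ≤ z^2/τ := by positivity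
  have hQ := Q_nonpos (τ := τ) hγpos hτpos (hr i) ha0.le hβ haD hw0 hu key2
  have hyτ : 0 ≤ y/τ := by positivity
  calc y/τ * (γl*(z^2/τ)*(2*a*γl - 1) + γl*z*(a - 2*r i) + (1 - 2*a*γl)/2 - r i * τ)
      ≤ y/τ * 0 := mul_le_mul_of_nonneg_left hQ hyτ
    _ = 0 := mul_zero _
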